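/- Limit of cyclic convolution sums for a summable even sequence. Let s ≥ 2 be an integer and let ρ : ℤ → ℝ be even (ρ(−k) = ρ(k)) with Σ_{k∈ℤ} |ρ(k)| < ∞. Then, as n → ∞, (1/n) · Σ_{k_1,…,k_s = 0}^{n−1} ρ(k_2 − k_1) ρ(k_3 − k_2) ⋯ ρ(k_s − k_{s−1}) ρ(k_1 − k_s) converges to Σ_{k_2,…,k_s ∈ ℤ} ρ(k_2) ρ(k_2 − k_3) ρ(k_3 − k_4) ⋯ ρ(k_{s−1} − k_s) ρ(k_s), and this limit equals ⟨ρ^{*(s−1)}, ρ⟩_{ℓ²(ℤ)}, where ρ^{*(s−1)} denotes the (s−1)-fold convolution of ρ with itself; in particular the limiting sum converges absolutely. -/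

import Mathlib

open Filter Finset

/-- Convolution of two sequences indexed by `ℤ`:
`(u*v)(j) = Σ_{n∈ℤ} u(n) v(j−n)`. -/
noncomputable def convZ (u v : ℤ → ℝ) : ℤ → ℝ :=
  fun j => ∑' n : ℤ, u n * v (j - n)

/-- Iterated self-convolution: `convIter u m = u^{*(m+1)}`. -/
noncomputable def convIter (u : ℤ → ℝ) : ℕ → ℤ → ℝ
  | 0 => u
  | (m + 1) => convZ (convIter u m) u

private lemma summable_pi_abs_prod (ρ : ℤ → ℝ) (hsum : Summable (fun k : ℤ => |ρ k|)) :
    ∀ m : ℕ, Summable (fun d : Fin m → ℤ => ∏ i, |ρ (d i)|) := by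
  intro m
  induction m with
  | zero =>
    haveI : Finite (Fin 0 → ℤ) := by infer_instance
    exact Summable.of_finite
  | succ m ih =>
    have h := hsum.mul_of_nonneg ih (fun k => abs_nonneg _)
      (fun d => Finset.prod_nonneg fun i _ => abs_nonneg _)
    apply (Equiv.summable_iff (Fin.consEquiv (fun _ : Fin (m+1) => ℤ))).mp
    have : ((fun d : Fin (m+1) → ℤ => ∏ i, |ρ (d i)|) ∘
        (Fin.consEquiv (fun _ : Fin (m+1) => ℤ)))
        = fun x : ℤ × (Fin m → ℤ) => |ρ x.1| * ∏ i, |ρ (x.2 i)| := by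
      funext x
      simp [Fin.consEquiv, Fin.prod_univ_succ]
    rw [this]
    exact h

private lemma summable_H (ρ : ℤ → ℝ) (hsum : Summable (fun k : ℤ => |ρ k|))
    (m : ℕ) (g : (Fin m → ℤ) → ℤ) :
    Summable (fun d : Fin m → ℤ => (∏ i, |ρ (d i)|) * |ρ (g d)|) := by
  have hC : ∀ k, |ρ k| ≤ ∑' j, |ρ j| := fun k => Summable.le_tsum hsum k (fun _ _ => abs_nonneg _)
  refine Summable.of_nonneg_of_le
    (fun d => mul_nonneg (Finset.prod_nonneg fun i _ => abs_nonneg _) (abs_nonneg _))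
    (fun d => mul_le_mul_of_nonneg_left (hC _) (Finset.prod_nonneg fun i _ => abs_nonneg _))
    ((summable_pi_abs_prod ρ hsum m).mul_right _)

private lemma summable_prod_mul (ρ : ℤ → ℝ) (hsum : Summable (fun k : ℤ => |ρ k|))
    (m : ℕ) (g : (Fin m → ℤ) → ℤ) :
    Summable (fun d : Fin m → ℤ => (∏ i, ρ (d i)) * ρ (g d)) := by
  apply Summable.of_abs
  have : (fun d : Fin m → ℤ => |(∏ i, ρ (d i)) * ρ (g d)|)
      = fun d => (∏ i, |ρ (d i)|) * |ρ (g d)| := by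
    funext d; rw [abs_mul, Finset.abs_prod]
  rw [this]
  exact summable_H ρ hsum m g

private lemma convIter_eq (ρ : ℤ → ℝ) (hsum : Summable (fun k : ℤ => |ρ k|)) :
    ∀ (m : ℕ) (k : ℤ), convIter ρ m k
      = ∑' d : {d : Fin (m + 1) → ℤ // ∑ i, d i = k}, ∏ i, ρ (d.1 i) := by
  intro m
  induction m with
  | zero =>
    intro k
    haveI asub : Subsingleton {d : Fin 1 → ℤ // ∑ i, d i = k} := by
      constructor
      rintro ⟨d, hd⟩ ⟨e, he⟩
      ext i
      simp at hd he
      have hi : i = 0 := Subsingleton.elim _ _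
      show d i = e i
      rw [hi, hd, he]
    rw [tsum_eq_single (⟨fun _ => k, by simp⟩ : {d : Fin 1 → ℤ // ∑ i, d i = k})
      (fun b hb => absurd (Subsingleton.elim b _) hb)]
    show ρ k = ∏ i : Fin 1, ρ k
    simp
  | succ m ih =>
    intro k
    have hs1 : Summable (fun e : Fin (m+1) → ℤ => (∏ i, ρ (e i)) * ρ (k - ∑ i, e i)) :=
      summable_prod_mul ρ hsum (m+1) (fun e => k - ∑ i, e i)
    have hsig : Summable (fun p : (n : ℤ) × {d : Fin (m+1) → ℤ // ∑ i, d i = n} =>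
        (∏ i, ρ (p.2.1 i)) * ρ (k - ∑ i, p.2.1 i)) := by
      apply (Equiv.summable_iff
        (Equiv.sigmaFiberEquiv (fun d : Fin (m+1) → ℤ => ∑ i, d i))).mpr hs1
    have hsumsnoc : ∀ (e : Fin (m+1) → ℤ) (x : ℤ),
        ∑ i : Fin (m+2), Fin.snoc e x i = (∑ i, e i) + x := by
      intro e x
      rw [Fin.sum_univ_castSucc]
      simp
    let E : (Fin (m+1) → ℤ) ≃ {d : Fin (m+2) → ℤ // ∑ i, d i = k} :=
      { toFun := fun e => ⟨Fin.snoc e (k - ∑ i, e i), by rw [hsumsnoc]; ring⟩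
        invFun := fun d => Fin.init d.1
        left_inv := fun e => Fin.init_snoc _ _
        right_inv := fun d => by
          ext1
          have h2 : (∑ i, Fin.init d.1 i) + d.1 (Fin.last (m+1)) = k := by
            have h3 := d.2
            rw [Fin.sum_univ_castSucc] at h3
            simpa [Fin.init] using h3
          show Fin.snoc (Fin.init d.1) (k - ∑ i, Fin.init d.1 i) = d.1
          rw [show k - ∑ i, Fin.init d.1 i = d.1 (Fin.last (m+1)) by omega]
          exact Fin.snoc_init_self d.1 }
    show convZ (convIter ρ m) ρ k = _
    rw [convZ]
    calc ∑' n : ℤ, convIter ρ m n * ρ (k - n)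
        = ∑' (n : ℤ) (d : {d : Fin (m+1) → ℤ // ∑ i, d i = n}),
            (∏ i, ρ (d.1 i)) * ρ (k - ∑ i, d.1 i) := by
          congr 1
          funext n
          rw [ih n, ← tsum_mul_right]
          congr 1
          funext d
          rw [d.2]
      _ = ∑' p : (n : ℤ) × {d : Fin (m+1) → ℤ // ∑ i, d i = n},
            (∏ i, ρ (p.2.1 i)) * ρ (k - ∑ i, p.2.1 i) := (Summable.tsum_sigma hsig).symm
      _ = ∑' e : Fin (m+1) → ℤ, (∏ i, ρ (e i)) * ρ (k - ∑ i, e i) := by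
          exact (Equiv.sigmaFiberEquiv (fun d : Fin (m+1) → ℤ => ∑ i, d i)).tsum_eq
            (fun e => (∏ i, ρ (e i)) * ρ (k - ∑ i, e i))
      _ = ∑' d : {d : Fin (m+2) → ℤ // ∑ i, d i = k}, ∏ i, ρ (d.1 i) := by
          rw [← E.tsum_eq]
          congr 1
          funext e
          show (∏ i, ρ (e i)) * ρ (k - ∑ i, e i) = ∏ i : Fin (m+2), ρ ((E e).1 i)
          have hEe : ((E e).1) = Fin.snoc e (k - ∑ i, e i) := rfl
          rw [hEe]
          conv_rhs => rw [Fin.prod_univ_castSucc]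
          simp only [Fin.snoc_castSucc, Fin.snoc_last]

private lemma tsum_H_eq (ρ : ℤ → ℝ) (hsum : Summable (fun k : ℤ => |ρ k|)) (r : ℕ) :
    ∑' d : Fin (r+1) → ℤ, (∏ i, ρ (d i)) * ρ (∑ i, d i)
      = ∑' k : ℤ, convIter ρ r k * ρ k := by
  have hH : Summable (fun d : Fin (r+1) → ℤ => (∏ i, ρ (d i)) * ρ (∑ i, d i)) :=
    summable_prod_mul ρ hsum (r+1) (fun d => ∑ i, d i)
  have hsig : Summable (fun p : (n : ℤ) × {d : Fin (r+1) → ℤ // ∑ i, d i = n} =>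
      (∏ i, ρ (p.2.1 i)) * ρ (∑ i, p.2.1 i)) :=
    (Equiv.summable_iff (Equiv.sigmaFiberEquiv (fun d : Fin (r+1) → ℤ => ∑ i, d i))).mpr hH
  rw [← (Equiv.sigmaFiberEquiv (fun d : Fin (r+1) → ℤ => ∑ i, d i)).tsum_eq
    (fun d : Fin (r+1) → ℤ => (∏ i, ρ (d i)) * ρ (∑ i, d i))]
  show (∑' p : (n : ℤ) × {d : Fin (r+1) → ℤ // ∑ i, d i = n},
      (∏ i, ρ (p.2.1 i)) * ρ (∑ i, p.2.1 i)) = _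
  rw [Summable.tsum_sigma hsig]
  congr 1
  funext n
  rw [convIter_eq ρ hsum r n, ← tsum_mul_right]
  congr 1
  funext d
  rw [d.2]

private lemma cesaro_box_limit (r : ℕ) (Fm : (Fin (r+1) → ℤ) → ℝ)
    (habs : Summable (fun m => |Fm m|)) :
    Tendsto (fun n : ℕ => (1 / (n:ℝ)) * ∑ t : Fin n,
        ∑ m ∈ Fintype.piFinset
          (fun _ : Fin (r+1) => Finset.Icc (-((t:ℕ):ℤ)) ((n:ℤ) - 1 - ((t:ℕ):ℤ))), Fm m)
      atTop (nhds (∑' m, Fm m)) := by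
  have hFm : Summable Fm := habs.of_abs
  set L := ∑' m, Fm m with hLdef
  set G := ∑' m, |Fm m| with hGdef
  have hGb : ∀ B : Finset (Fin (r+1) → ℤ), |∑ m ∈ B, Fm m| ≤ G := by
    intro B
    calc |∑ m ∈ B, Fm m| ≤ ∑ m ∈ B, |Fm m| := Finset.abs_sum_le_sum_abs _ _
      _ ≤ G := Summable.sum_le_tsum B (fun _ _ => abs_nonneg _) habs
  rw [Metric.tendsto_atTop]
  intro ε hε
  obtain ⟨A₀, hA₀⟩ : ∃ A₀ : Finset (Fin (r+1) → ℤ),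
      ∀ B : Finset (Fin (r+1) → ℤ), A₀ ⊆ B → |∑ m ∈ B, Fm m - L| < ε/2 := by
    have hHS := hFm.hasSum
    rw [HasSum] at hHS
    have h := Metric.tendsto_nhds.mp hHS (ε/2) (by positivity)
    rw [SummationFilter.unconditional_filter, Filter.eventually_atTop] at h
    obtain ⟨A₀, hA₀⟩ := h
    exact ⟨A₀, fun B hB => by have := hA₀ B hB; rwa [Real.dist_eq] at this⟩
  obtain ⟨M, hMmem⟩ : ∃ M : ℕ, ∀ m ∈ A₀, ∀ i, (m i).natAbs ≤ M := by
    refine ⟨A₀.sup (fun m => Finset.univ.sup (fun i => (m i).natAbs)), ?_⟩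
    intro m hm i
    have h1 : (m i).natAbs ≤ Finset.univ.sup (fun i => (m i).natAbs) :=
      Finset.le_sup (f := fun i => (m i).natAbs) (Finset.mem_univ i)
    have h2 : Finset.univ.sup (fun i => (m i).natAbs)
        ≤ A₀.sup (fun m => Finset.univ.sup (fun i => (m i).natAbs)) :=
      Finset.le_sup (f := fun m => Finset.univ.sup (fun i => (m i).natAbs)) hm
    exact le_trans h1 h2
  set C : ℝ := G + |L| with hC
  have hG0 : 0 ≤ G := tsum_nonneg fun _ => abs_nonneg _
  have hC0 : 0 ≤ C := add_nonneg hG0 (abs_nonneg _)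
  obtain ⟨N₀, hN₀⟩ := exists_nat_gt ((2*(M:ℝ)) * C / (ε/2))
  refine ⟨max N₀ (2*M+1), fun n hn => ?_⟩
  have hn1 : 2*M+1 ≤ n := le_trans (le_max_right _ _) hn
  have hnN₀ : N₀ ≤ n := le_trans (le_max_left _ _) hn
  have hnpos : 0 < n := by omega
  set Box : Fin n → Finset (Fin (r+1) → ℤ) := fun t =>
    Fintype.piFinset (fun _ : Fin (r+1) => Finset.Icc (-((t:ℕ):ℤ)) ((n:ℤ) - 1 - ((t:ℕ):ℤ)))
    with hBox
  have hbound : ∀ t : Fin n, |∑ m ∈ Box t, Fm m - L|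
      ≤ ε/2 + (if (t:ℕ) < M ∨ n - 1 < (t:ℕ) + M then C else 0) := by
    intro t
    by_cases hgood : (t:ℕ) < M ∨ n - 1 < (t:ℕ) + M
    · rw [if_pos hgood]
      have h1 : |∑ m ∈ Box t, Fm m - L| ≤ C := by
        calc |∑ m ∈ Box t, Fm m - L| ≤ |∑ m ∈ Box t, Fm m| + |L| := abs_sub _ _
          _ ≤ C := add_le_add_left (hGb _) _
      linarith
    · rw [if_neg hgood]
      push_neg at hgood
      have hsub : A₀ ⊆ Box t := by
        intro m hm
        rw [hBox]
        rw [Fintype.mem_piFinset]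
        intro i
        rw [Finset.mem_Icc]
        have h1 := hMmem m hm i
        have h2 := hgood.1
        have h3 := hgood.2
        have h4 := t.isLt
        omega
      have h4 := hA₀ (Box t) hsub
      linarith
  have hcard : (Finset.univ.filter
      (fun t : Fin n => (t:ℕ) < M ∨ n - 1 < (t:ℕ) + M)).card ≤ 2*M := by
    have hsplit : (Finset.univ.filter
        (fun t : Fin n => (t:ℕ) < M ∨ n - 1 < (t:ℕ) + M))
        ⊆ (Finset.univ.filter (fun t : Fin n => (t:ℕ) < M))
          ∪ (Finset.univ.filter (fun t : Fin n => n - 1 < (t:ℕ) + M)) := by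
      intro t ht
      simp only [Finset.mem_filter, Finset.mem_union, Finset.mem_univ, true_and] at ht ⊢
      exact ht
    have h1 : (Finset.univ.filter (fun t : Fin n => (t:ℕ) < M)).card ≤ M := by
      have := Finset.card_le_card_of_injOn (s := Finset.univ.filter (fun t : Fin n => (t:ℕ) < M)) (t := Finset.range M) (fun t : Fin n => (t:ℕ))
        (fun a ha => by
          simp only [Finset.coe_filter, Set.mem_setOf_eq, Finset.mem_filter, Finset.mem_univ, true_and] at ha
          exact Finset.mem_range.mpr ha)
        (fun a _ b _ h => Fin.ext h)
      simpa using this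
    have h2 : (Finset.univ.filter (fun t : Fin n => n - 1 < (t:ℕ) + M)).card ≤ M := by
      have := Finset.card_le_card_of_injOn (s := Finset.univ.filter (fun t : Fin n => n - 1 < (t:ℕ) + M)) (t := Finset.range M) (fun t : Fin n => n - 1 - (t:ℕ))
        (fun a ha => by
          simp only [Finset.coe_filter, Set.mem_setOf_eq, Finset.mem_filter, Finset.mem_univ, true_and] at ha
          have := a.isLt
          refine Finset.mem_range.mpr ?_
          show n - 1 - (a:ℕ) < M
          omega)
        (fun a ha b hb h => by
          simp only [Finset.coe_filter, Set.mem_setOf_eq] at ha hb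
          have ha2 := a.isLt
          have hb2 := b.isLt
          have h' : n - 1 - (a:ℕ) = n - 1 - (b:ℕ) := h
          exact Fin.ext (by omega))
      simpa using this
    calc _ ≤ _ := Finset.card_le_card hsplit
      _ ≤ _ := Finset.card_union_le _ _
      _ ≤ 2*M := by omega
  have hsum_t : ∑ t : Fin n, |∑ m ∈ Box t, Fm m - L| ≤ n * (ε/2) + (2*M) * C := by
    calc ∑ t : Fin n, |∑ m ∈ Box t, Fm m - L|
        ≤ ∑ t : Fin n, (ε/2 + (if (t:ℕ) < M ∨ n - 1 < (t:ℕ) + M then C else 0)) :=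
          Finset.sum_le_sum (fun t _ => hbound t)
      _ = n * (ε/2) + ∑ t : Fin n, (if (t:ℕ) < M ∨ n - 1 < (t:ℕ) + M then C else 0) := by
          rw [Finset.sum_add_distrib, Finset.sum_const, Finset.card_univ, Fintype.card_fin,
            nsmul_eq_mul]
      _ ≤ n * (ε/2) + (2*M) * C := by
          refine add_le_add le_rfl ?_
          rw [← Finset.sum_filter, Finset.sum_const, nsmul_eq_mul]
          refine mul_le_mul_of_nonneg_right ?_ hC0
          calc ((Finset.univ.filter
              (fun t : Fin n => (t:ℕ) < M ∨ n - 1 < (t:ℕ) + M)).card : ℝ)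
              ≤ ((2*M : ℕ) : ℝ) := by exact_mod_cast hcard
            _ = 2*(M:ℝ) := by push_cast; ring
  rw [Real.dist_eq]
  have hne : (n:ℝ) ≠ 0 := Nat.cast_ne_zero.mpr hnpos.ne'
  have hnpos' : (0:ℝ) < n := by exact_mod_cast hnpos
  have key : (1/(n:ℝ)) * (∑ t : Fin n, ∑ m ∈ Box t, Fm m) - L
      = (1/(n:ℝ)) * ∑ t : Fin n, (∑ m ∈ Box t, Fm m - L) := by
    rw [Finset.sum_sub_distrib, Finset.sum_const, Finset.card_univ, Fintype.card_fin,
      nsmul_eq_mul]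
    field_simp
  rw [key]
  have hlast : (2*(M:ℝ))*C/n < ε/2 := by
    have h5 : (2*(M:ℝ)) * C / (ε/2) < n := lt_of_lt_of_le hN₀ (by exact_mod_cast hnN₀)
    have h6 : (2*(M:ℝ)) * C < n * (ε/2) := by
      have := (div_lt_iff₀ (by positivity : (0:ℝ) < ε/2)).mp h5
      linarith
    rw [div_lt_iff₀ hnpos']
    linarith
  calc |(1/(n:ℝ)) * ∑ t : Fin n, (∑ m ∈ Box t, Fm m - L)|
      = (1/(n:ℝ)) * |∑ t : Fin n, (∑ m ∈ Box t, Fm m - L)| := by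
        rw [abs_mul, abs_of_nonneg (by positivity : (0:ℝ) ≤ 1/(n:ℝ))]
    _ ≤ (1/(n:ℝ)) * ∑ t : Fin n, |∑ m ∈ Box t, Fm m - L| := by
        gcongr
        exact Finset.abs_sum_le_sum_abs _ _
    _ ≤ (1/(n:ℝ)) * (n * (ε/2) + (2*M) * C) := by gcongr
    _ = ε/2 + (2*(M:ℝ))*C/n := by field_simp
    _ < ε/2 + ε/2 := by linarith
    _ = ε := by ring

private lemma reindex_sum (r n : ℕ) (Fm : (Fin (r+1) → ℤ) → ℝ)
    (F' : (Fin (r+2) → Fin n) → ℝ)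
    (hF' : ∀ k, F' k = Fm (fun i => ((k i.succ : ℕ):ℤ) - ((k 0 : ℕ):ℤ))) :
    ∑ k : Fin (r+2) → Fin n, F' k
      = ∑ t : Fin n, ∑ m ∈ Fintype.piFinset
          (fun _ : Fin (r+1) => Finset.Icc (-((t:ℕ):ℤ)) ((n:ℤ) - 1 - ((t:ℕ):ℤ))), Fm m := by
  rw [← Finset.sum_sigma (Finset.univ : Finset (Fin n))
    (fun t => Fintype.piFinset
      (fun _ : Fin (r+1) => Finset.Icc (-((t:ℕ):ℤ)) ((n:ℤ) - 1 - ((t:ℕ):ℤ))))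
    (fun p => Fm p.2)]
  refine Finset.sum_bij'
    (fun (k : Fin (r+2) → Fin n) _ =>
      (⟨k 0, fun i => ((k i.succ : ℕ):ℤ) - ((k 0 : ℕ):ℤ)⟩ :
        Σ t : Fin n, Fin (r+1) → ℤ))
    (fun p hp => Fin.cons p.1 (fun i => (⟨(p.2 i + ((p.1:ℕ):ℤ)).toNat, by
      have h1 := (Fintype.mem_piFinset.mp (Finset.mem_sigma.mp hp).2) i
      rw [Finset.mem_Icc] at h1
      have h2 := p.1.isLt
      omega⟩ : Fin n)))
    ?_ ?_ ?_ ?_ ?_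
  · -- hi : maps into sigma finset
    intro k _
    rw [Finset.mem_sigma]
    refine ⟨Finset.mem_univ _, ?_⟩
    rw [Fintype.mem_piFinset]
    intro i
    show ((k i.succ : ℕ):ℤ) - ((k 0 : ℕ):ℤ)
      ∈ Finset.Icc (-((k 0 : ℕ):ℤ)) ((n:ℤ) - 1 - ((k 0 : ℕ):ℤ))
    rw [Finset.mem_Icc]
    have h1 := (k i.succ).isLt
    have h2 := (k 0).isLt
    omega
  · -- hj
    intro p hp
    exact Finset.mem_univ _
  · -- left_inv : j (i k) = k
    intro k _
    funext j
    refine Fin.cases ?_ (fun i => ?_) j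
    · rfl
    · apply Fin.ext
      show (((k i.succ : ℕ):ℤ) - ((k 0 : ℕ):ℤ) + ((k 0 : ℕ):ℤ)).toNat = (k i.succ : ℕ)
      omega
  · -- right_inv : i (j p) = p
    rintro ⟨t, m⟩ hp
    show (⟨t, fun i => (((m i + ((t:ℕ):ℤ)).toNat : ℕ) : ℤ) - ((t:ℕ):ℤ)⟩
      : Σ _ : Fin n, Fin (r+1) → ℤ) = ⟨t, m⟩
    congr 1
    funext i
    have h1 := (Fintype.mem_piFinset.mp (Finset.mem_sigma.mp hp).2) i
    rw [Finset.mem_Icc] at h1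
    have h1' : -((t:ℕ):ℤ) ≤ m i ∧ m i ≤ (n:ℤ) - 1 - ((t:ℕ):ℤ) := h1
    have h2 := t.isLt
    show (((m i + ((t:ℕ):ℤ)).toNat : ℕ) : ℤ) - ((t:ℕ):ℤ) = m i
    omega
  · -- values
    intro k _
    exact hF' k

/-- partial sums map -/
private def psZ (r : ℕ) (d : Fin (r+1) → ℤ) : Fin (r+2) → ℤ :=
  fun j => ∑ l : Fin (r+1), if (l:ℕ) < (j:ℕ) then d l else 0

private lemma psZ_zero (r : ℕ) (d : Fin (r+1) → ℤ) : psZ r d 0 = 0 := by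
  unfold psZ
  simp

private lemma psZ_last (r : ℕ) (d : Fin (r+1) → ℤ) :
    psZ r d (Fin.last (r+1)) = ∑ i, d i := by
  unfold psZ
  refine Finset.sum_congr rfl (fun l _ => ?_)
  rw [if_pos]
  exact l.isLt

private lemma psZ_diff (r : ℕ) (d : Fin (r+1) → ℤ) (i : Fin (r+1)) :
    psZ r d i.succ - psZ r d i.castSucc = d i := by
  unfold psZ
  rw [← Finset.sum_sub_distrib]
  have : ∀ l : Fin (r+1),
      ((if (l:ℕ) < ((i.succ : Fin (r+2)):ℕ) then d l else 0)
        - (if (l:ℕ) < ((i.castSucc : Fin (r+2)):ℕ) then d l else 0))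
      = if l = i then d l else 0 := by
    intro l
    rw [Fin.val_succ, Fin.coe_castSucc]
    rcases lt_trichotomy (l:ℕ) (i:ℕ) with h | h | h
    · rw [if_pos (by omega), if_pos h, if_neg (by intro he; rw [he] at h; omega)]
      ring
    · rw [if_pos (by omega), if_neg (by omega), if_pos (Fin.ext h)]
      ring
    · rw [if_neg (by omega), if_neg (by omega),
        if_neg (by intro he; rw [he] at h; omega)]
      ring
  rw [Finset.sum_congr rfl (fun l _ => this l)]
  simp

private lemma psZ_right (r : ℕ) (k : Fin (r+2) → ℤ) (hk : k 0 = 0) (j : Fin (r+2)) :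
    psZ r (fun i => k i.succ - k i.castSucc) j = k j := by
  unfold psZ
  set g : ℕ → ℤ := fun a => if h : a < r + 2 then k ⟨a, h⟩ else 0 with hg
  have hterm : ∀ l : Fin (r+1), k l.succ - k l.castSucc = g ((l:ℕ)+1) - g (l:ℕ) := by
    intro l
    have h1 : g ((l:ℕ)+1) = k l.succ := by
      show (if h : (l:ℕ)+1 < r + 2 then k ⟨(l:ℕ)+1, h⟩ else 0) = k l.succ
      rw [dif_pos (by omega : (l:ℕ)+1 < r+2)]
      congr 1
    have h2 : g (l:ℕ) = k l.castSucc := by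
      show (if h : (l:ℕ) < r + 2 then k ⟨(l:ℕ), h⟩ else 0) = k l.castSucc
      rw [dif_pos (by omega : (l:ℕ) < r+2)]
      congr 1
    rw [h1, h2]
  calc (∑ l : Fin (r+1), if (l:ℕ) < (j:ℕ) then k l.succ - k l.castSucc else 0)
      = ∑ l : Fin (r+1), (if (l:ℕ) < (j:ℕ) then g ((l:ℕ)+1) - g (l:ℕ) else 0) := by
        refine Finset.sum_congr rfl (fun l _ => ?_)
        rw [hterm l]
    _ = ∑ a ∈ Finset.range (r+1), (if a < (j:ℕ) then g (a+1) - g a else 0) :=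
        Fin.sum_univ_eq_sum_range (fun a => if a < (j:ℕ) then g (a+1) - g a else 0) (r+1)
    _ = ∑ a ∈ (Finset.range (r+1)).filter (fun a => a < (j:ℕ)), (g (a+1) - g a) :=
        (Finset.sum_filter _ _).symm
    _ = ∑ a ∈ Finset.range (j:ℕ), (g (a+1) - g a) := by
        congr 1
        ext a
        simp only [Finset.mem_filter, Finset.mem_range]
        have := j.isLt
        omega
    _ = g (j:ℕ) - g 0 := Finset.sum_range_sub g (j:ℕ)
    _ = k j := by
        show (if h : (j:ℕ) < r + 2 then k ⟨(j:ℕ), h⟩ else 0)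
          - (if h : 0 < r + 2 then k ⟨0, h⟩ else 0) = k j
        rw [dif_pos j.isLt, dif_pos (by omega : 0 < r+2)]
        have h0 : k ⟨0, by omega⟩ = 0 := hk
        rw [h0, Fin.eta]
        ring

/-- **Limit of cyclic convolution sums for a summable even sequence.** For an
even `ρ ∈ ℓ¹(ℤ)` and `s ≥ 2`,
`(1/n) Σ_{k_1,…,k_s=0}^{n−1} ρ(k_2−k_1)⋯ρ(k_1−k_s)` converges to
`Σ_{k_2,…,k_s∈ℤ} ρ(k_2)ρ(k_2−k_3)⋯ρ(k_{s−1}−k_s)ρ(k_s) = ⟨ρ^{*(s−1)}, ρ⟩_{ℓ²(ℤ)}`,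
and the limiting sum converges absolutely. -/
theorem cyclic_convolution_sum_limit
    (s : ℕ) [NeZero s] (hs : 2 ≤ s)
    (ρ : ℤ → ℝ) (heven : ∀ k : ℤ, ρ (-k) = ρ k)
    (hsum : Summable (fun k : ℤ => |ρ k|)) :
    Summable (fun k : {k : Fin s → ℤ // k 0 = 0} =>
      |∏ j : Fin s, ρ (k.1 (j + 1) - k.1 j)|) ∧
    Tendsto (fun n : ℕ =>
        (1 / (n : ℝ)) * ∑ k : Fin s → Fin n,
          ∏ j : Fin s, ρ (((k (j + 1) : ℕ) : ℤ) - ((k j : ℕ) : ℤ)))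
      atTop
      (nhds (∑' k : {k : Fin s → ℤ // k 0 = 0},
        ∏ j : Fin s, ρ (k.1 (j + 1) - k.1 j))) ∧
    (∑' k : {k : Fin s → ℤ // k 0 = 0}, ∏ j : Fin s, ρ (k.1 (j + 1) - k.1 j)) =
      ∑' k : ℤ, convIter ρ (s - 2) k * ρ k := by
  obtain ⟨r, rfl⟩ : ∃ r, s = r + 2 := ⟨s - 2, by omega⟩
  -- the difference-parametrization equivalence
  let Eps : (Fin (r+1) → ℤ) ≃ {k : Fin (r+2) → ℤ // k 0 = 0} :=
    { toFun := fun d => ⟨psZ r d, psZ_zero r d⟩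
      invFun := fun k i => k.1 i.succ - k.1 i.castSucc
      left_inv := fun d => by funext i; exact psZ_diff r d i
      right_inv := fun k => by
        ext1
        funext j
        exact psZ_right r k.1 k.2 j }
  have hFEps : ∀ d : Fin (r+1) → ℤ,
      (∏ j : Fin (r+2), ρ (psZ r d (j + 1) - psZ r d j))
        = (∏ i, ρ (d i)) * ρ (∑ i, d i) := by
    intro d
    rw [Fin.prod_univ_castSucc]
    congr 1
    · refine Finset.prod_congr rfl (fun i _ => ?_)
      congr 1
      rw [Fin.coeSucc_eq_succ]
      exact psZ_diff r d i
    · rw [Fin.last_add_one, psZ_zero, psZ_last]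
      rw [show (0 : ℤ) - ∑ i, d i = -(∑ i, d i) by ring, heven]
  have habs : Summable (fun k : {k : Fin (r+2) → ℤ // k 0 = 0} =>
      |∏ j : Fin (r+2), ρ (k.1 (j + 1) - k.1 j)|) := by
    apply (Equiv.summable_iff Eps).mp
    have he : ((fun k : {k : Fin (r+2) → ℤ // k 0 = 0} =>
        |∏ j : Fin (r+2), ρ (k.1 (j + 1) - k.1 j)|) ∘ Eps)
        = fun d : Fin (r+1) → ℤ => (∏ i, |ρ (d i)|) * |ρ (∑ i, d i)| := by
      funext d
      show |∏ j : Fin (r+2), ρ (psZ r d (j + 1) - psZ r d j)| = _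
      rw [hFEps d, abs_mul, Finset.abs_prod]
    rw [he]
    exact summable_H ρ hsum (r+1) (fun d => ∑ i, d i)
  refine ⟨habs, ?_, ?_⟩
  · -- the limit
    -- position-parametrization equivalence
    let Eψ : {k : Fin (r+2) → ℤ // k 0 = 0} ≃ (Fin (r+1) → ℤ) :=
      { toFun := fun k i => k.1 i.succ
        invFun := fun m => ⟨Fin.cons 0 m, by rw [Fin.cons_zero]⟩
        left_inv := fun k => by
          ext1
          funext j
          show (Fin.cons 0 (fun i => k.1 i.succ) : Fin (r+2) → ℤ) j = k.1 j
          refine Fin.cases ?_ (fun i => ?_) j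
          · rw [Fin.cons_zero, k.2]
          · rw [Fin.cons_succ]
        right_inv := fun m => by
          funext i
          show (Fin.cons 0 m : Fin (r+2) → ℤ) i.succ = m i
          rw [Fin.cons_succ] }
    set Fm : (Fin (r+1) → ℤ) → ℝ :=
      fun m => ∏ j : Fin (r+2), ρ ((Eψ.symm m).1 (j + 1) - (Eψ.symm m).1 j) with hFm
    have habsFm : Summable (fun m => |Fm m|) :=
      (Equiv.summable_iff Eψ.symm).mpr habs
    have hts : (∑' m, Fm m)
        = ∑' k : {k : Fin (r+2) → ℤ // k 0 = 0},
            ∏ j : Fin (r+2), ρ (k.1 (j + 1) - k.1 j) := by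
      rw [hFm]
      exact Eψ.symm.tsum_eq (fun k : {k : Fin (r+2) → ℤ // k 0 = 0} =>
        ∏ j : Fin (r+2), ρ (k.1 (j + 1) - k.1 j))
    have h2 := cesaro_box_limit r Fm habsFm
    rw [hts] at h2
    refine Tendsto.congr (fun n => ?_) h2
    congr 1
    refine (reindex_sum r n Fm _ (fun k => ?_)).symm
    -- translation invariance
    show (∏ j : Fin (r+2), ρ (((k (j + 1) : ℕ):ℤ) - ((k j : ℕ):ℤ)))
      = ∏ j : Fin (r+2), ρ
          ((Fin.cons 0 (fun i => ((k i.succ : ℕ):ℤ) - ((k 0 : ℕ):ℤ)) : Fin (r+2) → ℤ) (j + 1)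
            - (Fin.cons 0 (fun i => ((k i.succ : ℕ):ℤ) - ((k 0 : ℕ):ℤ)) : Fin (r+2) → ℤ) j)
    have hc : ∀ j : Fin (r+2),
        (Fin.cons 0 (fun i => ((k i.succ : ℕ):ℤ) - ((k 0 : ℕ):ℤ)) : Fin (r+2) → ℤ) j
          = ((k j : ℕ):ℤ) - ((k 0 : ℕ):ℤ) := by
      intro j
      refine Fin.cases ?_ (fun i => ?_) j
      · rw [Fin.cons_zero]; ring
      · rw [Fin.cons_succ]
    refine Finset.prod_congr rfl (fun j _ => ?_)
    rw [hc, hc]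
    congr 1
    ring
  · -- identification with the convolution
    have key : (∑' k : {k : Fin (r+2) → ℤ // k 0 = 0},
        ∏ j : Fin (r+2), ρ (k.1 (j + 1) - k.1 j)) = ∑' k : ℤ, convIter ρ r k * ρ k := by
      calc (∑' k : {k : Fin (r+2) → ℤ // k 0 = 0},
            ∏ j : Fin (r+2), ρ (k.1 (j + 1) - k.1 j))
          = ∑' d : Fin (r+1) → ℤ,
              ∏ j : Fin (r+2), ρ ((Eps d).1 (j + 1) - (Eps d).1 j) := (Eps.tsum_eq _).symm
        _ = ∑' d : Fin (r+1) → ℤ, (∏ i, ρ (d i)) * ρ (∑ i, d i) :=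
            tsum_congr (fun d => hFEps d)
        _ = ∑' k : ℤ, convIter ρ r k * ρ k := tsum_H_eq ρ hsum r
    rw [show r + 2 - 2 = r by omega]
    exact key
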